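/- With the same setup, Cov(Y_k, Y_ℓ) = γ_k(−A_k)^{−2}D_k(−A_{k+1})^{−1}D_{k+1} ⋯ (−A_{ℓ−1})^{−1}D_{ℓ−1}(−A_ℓ)^{−1}𝟏 − (γ_k(−A_k)^{−1}𝟏)(γ_ℓ(−A_ℓ)^{−1}𝟏) for 1 ≤ k < ℓ ≤ n. -/

import Mathlib

open Matrix MeasureTheory Filter

/-- Iterated left-multiplication of a row vector by a chain of (rectangular) step
matrices `M 0, M 1, …`, yielding a row vector at every intermediate position. -/
noncomputable def chainRow {n : ℕ} (d : Fin (n + 1) → ℕ)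
    (M : (k : Fin n) → Matrix (Fin (d k.castSucc)) (Fin (d k.succ)) ℝ)
    (v0 : Fin (d 0) → ℝ) : (k : Fin (n + 1)) → Fin (d k) → ℝ :=
  Fin.induction v0 (fun k ih => ih ᵥ* M k)

section Auxiliary

open NormedSpace Set intervalIntegral


noncomputable abbrev matNR {N : ℕ} : NormedRing (Matrix (Fin N) (Fin N) ℝ) :=
  { (Matrix.linftyOpNormedRing : NormedRing (Matrix (Fin N) (Fin N) ℝ)) with
    toUniformSpace := inferInstance
    toRing := Matrix.instRing }
attribute [local instance] matNR
noncomputable abbrev matNA {N : ℕ} : NormedAlgebra ℝ (Matrix (Fin N) (Fin N) ℝ) :=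
  { (Matrix.linftyOpNormedAlgebra : NormedAlgebra ℝ (Matrix (Fin N) (Fin N) ℝ)) with
    toAlgebra := Matrix.instAlgebra }
attribute [local instance] matNA
noncomputable abbrev matNAQ {N : ℕ} : NormedAlgebra ℚ (Matrix (Fin N) (Fin N) ℝ) :=
  { (NormedAlgebra.restrictScalars ℚ ℝ (Matrix (Fin N) (Fin N) ℝ) :
      NormedAlgebra ℚ (Matrix (Fin N) (Fin N) ℝ)) with
    toAlgebra := Matrix.instAlgebra }
attribute [local instance] matNAQ

variable {N : ℕ} (B : Matrix (Fin N) (Fin N) ℝ)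

private lemma exp_cont : Continuous (fun t : ℝ => exp (t • B)) :=
  exp_continuous.comp (continuous_id.smul continuous_const)

private lemma exp_decay_bound
    (hdecay : ∀ i j, Tendsto (fun t : ℝ => (exp (t • B)) i j) atTop (nhds 0)) :
    ∃ c C : ℝ, 0 < c ∧ 0 ≤ C ∧ ∀ t : ℝ, 0 ≤ t → ‖exp (t • B)‖ ≤ C * Real.exp (-c * t) := by
  have hT : Tendsto (fun t : ℝ => exp (t • B)) atTop (nhds 0) := by
    apply tendsto_pi_nhds.2; intro i; apply tendsto_pi_nhds.2; intro j; exact hdecay i j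
  have hTn : Tendsto (fun t : ℝ => ‖exp (t • B)‖) atTop (nhds 0) := by
    simpa using hT.norm
  obtain ⟨T₀, hT₀1, hT₀half⟩ :
      ∃ T₀ : ℝ, 1 ≤ T₀ ∧ ‖exp (T₀ • B)‖ ≤ 1 / 2 := by
    have := (eventually_ge_atTop (1:ℝ)).and
      (hTn.eventually_lt_const (by norm_num : (0:ℝ) < 1/2))
    obtain ⟨T₀, h1, h2⟩ := this.exists
    exact ⟨T₀, h1, h2.le⟩
  have hT₀pos : (0:ℝ) < T₀ := lt_of_lt_of_le one_pos hT₀1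
  obtain ⟨C₀, hC₀⟩ := (isCompact_Icc (a := (0:ℝ)) (b := T₀)).exists_bound_of_continuousOn
    ((exp_cont B).continuousOn)
  set C := max C₀ 1 with hC
  have hC1 : 1 ≤ C := le_max_right _ _
  have hC₀' : ∀ r ∈ Icc (0:ℝ) T₀, ‖exp (r • B)‖ ≤ C := fun r hr =>
    (hC₀ r hr).trans (le_max_left _ _)
  -- main geometric bound
  have key : ∀ t : ℝ, 0 ≤ t → ‖exp (t • B)‖ ≤ C * (1/2) ^ (⌊t / T₀⌋₊) := by
    intro t ht
    set k := ⌊t / T₀⌋₊ with hk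
    have hkT : (k : ℝ) * T₀ ≤ t := by
      rw [← le_div_iff₀ hT₀pos]
      exact Nat.floor_le (by positivity)
    have hrub : t - k * T₀ < T₀ := by
      have : t / T₀ < k + 1 := Nat.lt_floor_add_one _
      have := (div_lt_iff₀ hT₀pos).mp this
      nlinarith
    have hsplit : exp (t • B) = exp ((t - k * T₀) • B) * exp (((k : ℝ) * T₀) • B) := by
      rw [← NormedSpace.exp_add_of_commute]
      · congr 1; module
      · exact (Commute.refl B).smul_left _ |>.smul_right _
    have hpow : exp (((k : ℝ) * T₀) • B) = (exp (T₀ • B)) ^ k := by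
      have : ((k : ℝ) * T₀) • B = (k : ℕ) • (T₀ • B) := by
        rw [mul_smul, Nat.cast_smul_eq_nsmul]
      rw [this, NormedSpace.exp_nsmul]
    have hr0 : ‖exp ((t - k * T₀) • B)‖ ≤ C :=
      hC₀' _ ⟨by linarith, by linarith⟩
    rcases Nat.eq_zero_or_pos k with hk0 | hkpos
    · rw [hk0]; simp only [pow_zero, mul_one]
      have : t - (k:ℝ) * T₀ = t := by rw [hk0]; simp
      rw [hsplit, hpow, hk0, pow_zero, mul_one]
      simpa [this] using hr0
    · calc ‖exp (t • B)‖ ≤ ‖exp ((t - k * T₀) • B)‖ * ‖(exp (T₀ • B)) ^ k‖ := by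
            rw [hsplit, hpow]; exact norm_mul_le _ _
        _ ≤ C * (1/2) ^ k := by
            apply mul_le_mul hr0 _ (norm_nonneg _) (le_trans zero_le_one hC1)
            calc ‖(exp (T₀ • B)) ^ k‖ ≤ ‖exp (T₀ • B)‖ ^ k := norm_pow_le' _ hkpos
              _ ≤ (1/2) ^ k := pow_le_pow_left₀ (norm_nonneg _) hT₀half k
    -- done
  refine ⟨Real.log 2 / T₀, 2 * C, by positivity, by positivity, fun t ht => ?_⟩
  calc ‖exp (t • B)‖ ≤ C * (1/2) ^ (⌊t / T₀⌋₊) := key t ht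
    _ ≤ 2 * C * Real.exp (-(Real.log 2 / T₀) * t) := by
        have h1 : ((1:ℝ)/2) ^ (⌊t / T₀⌋₊) = Real.exp (-(Real.log 2) * ⌊t / T₀⌋₊) := by
          rw [← Real.exp_log (show (0:ℝ) < 1/2 by norm_num)]
          rw [← Real.exp_nat_mul]
          congr 1
          rw [Real.log_div one_ne_zero two_ne_zero, Real.log_one]
          ring
        have h2 : t / T₀ - 1 ≤ (⌊t / T₀⌋₊ : ℝ) := by
          have := Nat.sub_one_lt_floor (t / T₀)
          linarith
        have hlog2 : (0:ℝ) < Real.log 2 := Real.log_pos one_lt_two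
        have h3 : Real.exp (-(Real.log 2) * ⌊t / T₀⌋₊) ≤
            Real.exp (-(Real.log 2) * (t / T₀ - 1)) := by
          apply Real.exp_le_exp.mpr
          nlinarith
        calc C * (1/2) ^ (⌊t / T₀⌋₊) ≤ C * Real.exp (-(Real.log 2) * (t / T₀ - 1)) := by
              rw [h1]; exact mul_le_mul_of_nonneg_left h3 (by linarith)
          _ ≤ 2 * C * Real.exp (-(Real.log 2 / T₀) * t) := by
              rw [show -(Real.log 2) * (t / T₀ - 1) = -(Real.log 2 / T₀) * t + Real.log 2 by
                field_simp; ring]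
              rw [Real.exp_add, Real.exp_log two_pos]
              calc C * (Real.exp (-(Real.log 2 / T₀) * t) * 2)
                  = 2 * C * Real.exp (-(Real.log 2 / T₀) * t) := by ring
                _ ≤ _ := le_refl _

private lemma exp_integrableOn
    (hdecay : ∀ i j, Tendsto (fun t : ℝ => (exp (t • B)) i j) atTop (nhds 0))
    (e : ℕ) (he : e ≤ 1) :
    IntegrableOn (fun t : ℝ => t ^ e • exp (t • B)) (Ioi (0:ℝ)) := by
  obtain ⟨c, C, hc, hC, hbound⟩ := exp_decay_bound B hdecay
  have hcont : Continuous (fun t : ℝ => t ^ e • exp (t • B)) :=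
    (continuous_pow e).smul (exp_cont B)
  apply Integrable.mono' (g := fun t => (C * max 1 (2/c)) * Real.exp (-(c/2) * t))
  · exact ((exp_neg_integrableOn_Ioi 0 (by positivity)).const_mul _)
  · exact hcont.aestronglyMeasurable.restrict
  · filter_upwards [ae_restrict_mem measurableSet_Ioi] with t ht
    have ht0 : (0:ℝ) < t := ht
    have h1 : ‖t ^ e • exp (t • B)‖ = t ^ e * ‖exp (t • B)‖ := by
      rw [norm_smul, Real.norm_eq_abs, abs_of_nonneg (by positivity)]
    have h2 : t ^ e ≤ max 1 (2/c) * Real.exp ((c/2) * t) := by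
      rcases Nat.le_one_iff_eq_zero_or_eq_one.mp he with rfl | rfl
      · simpa using le_trans (by simpa using Real.one_le_exp (by positivity : (0:ℝ) ≤ c/2*t))
          (le_mul_of_one_le_left (Real.exp_pos _).le (le_max_left _ _))
      · have h5 : (c/2) * t ≤ Real.exp ((c/2)*t) := (Real.add_one_le_exp _).trans' (by linarith)
        have h3 : t ≤ (2/c) * Real.exp ((c/2)*t) := by
          rw [div_mul_eq_mul_div, le_div_iff₀ hc]
          nlinarith
        simpa using h3.trans (mul_le_mul_of_nonneg_right (le_max_right 1 (2/c))
          (Real.exp_pos _).le)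
    calc ‖t ^ e • exp (t • B)‖ = t ^ e * ‖exp (t • B)‖ := h1
      _ ≤ (max 1 (2/c) * Real.exp ((c/2) * t)) * (C * Real.exp (-c * t)) := by
          apply mul_le_mul h2 (hbound t ht0.le) (norm_nonneg _) (by positivity)
      _ = (C * max 1 (2/c)) * Real.exp ((c/2) * t + -c * t) := by
          rw [Real.exp_add]; ring
      _ = (C * max 1 (2/c)) * Real.exp (-(c/2) * t) := by ring_nf

private lemma exp_ftc0 (hdet : IsUnit B.det) (T : ℝ) :
    ∫ t in (0:ℝ)..T, exp (t • B) = exp (T • B) * B⁻¹ - B⁻¹ := by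
  have hBB : B * B⁻¹ = 1 := Matrix.mul_nonsing_inv B hdet
  have hderiv : ∀ t ∈ Set.uIcc (0:ℝ) T,
      HasDerivAt (fun u : ℝ => exp (u • B) * B⁻¹) (exp (t • B)) t := by
    intro t _
    have h := (hasDerivAt_exp_smul_const B t).mul_const B⁻¹
    simpa [Matrix.mul_assoc, hBB] using h
  have := intervalIntegral.integral_eq_sub_of_hasDerivAt hderiv
    ((exp_cont B).intervalIntegrable 0 T)
  simpa using this

private lemma exp_ftc1 (hdet : IsUnit B.det) (T : ℝ) :
    ∫ t in (0:ℝ)..T, t • exp (t • B)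
      = T • (exp (T • B) * B⁻¹) - exp (T • B) * (B⁻¹ * B⁻¹) + B⁻¹ * B⁻¹ := by
  have hBB : B * B⁻¹ = 1 := Matrix.mul_nonsing_inv B hdet
  have hderiv : ∀ t ∈ Set.uIcc (0:ℝ) T,
      HasDerivAt (fun u : ℝ => u • (exp (u • B) * B⁻¹) - exp (u • B) * (B⁻¹ * B⁻¹))
        (t • exp (t • B)) t := by
    intro t _
    have h1 : HasDerivAt (fun u : ℝ => exp (u • B) * B⁻¹)
        (exp (t • B) * B * B⁻¹) t := (hasDerivAt_exp_smul_const B t).mul_const B⁻¹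
    have h2 := (hasDerivAt_id t).smul h1
    have h3 := (hasDerivAt_exp_smul_const B t).mul_const (B⁻¹ * B⁻¹)
    have h4 := h2.sub h3
    have simp1 : exp (t • B) * B * B⁻¹ = exp (t • B) := by
      rw [Matrix.mul_assoc, hBB, Matrix.mul_one]
    have simp2 : exp (t • B) * B * (B⁻¹ * B⁻¹) = exp (t • B) * B⁻¹ := by
      rw [Matrix.mul_assoc, ← Matrix.mul_assoc B, hBB, Matrix.one_mul]
    rw [simp1] at h4
    have : (fun u : ℝ => id u • (exp (u • B) * B⁻¹) - exp (u • B) * (B⁻¹ * B⁻¹))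
        = (fun u : ℝ => u • (exp (u • B) * B⁻¹) - exp (u • B) * (B⁻¹ * B⁻¹)) := rfl
    replace h4 : HasDerivAt (fun u : ℝ => u • (exp (u • B) * B⁻¹) - exp (u • B) * (B⁻¹ * B⁻¹)) _ t := h4
    convert h4 using 1
    rw [simp2]
    simp only [id_eq, one_smul]
    abel
  have hInt : IntervalIntegrable (fun t : ℝ => t • exp (t • B)) volume 0 T :=
    (continuous_id.smul (exp_cont B)).intervalIntegrable 0 T
  have := intervalIntegral.integral_eq_sub_of_hasDerivAt hderiv hInt
  rw [this]
  simp

private lemma exp_tendsto_zero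
    (hdecay : ∀ i j, Tendsto (fun t : ℝ => (exp (t • B)) i j) atTop (nhds 0)) :
    Tendsto (fun T : ℝ => exp (T • B)) atTop (nhds 0) := by
  apply tendsto_pi_nhds.2; intro i; apply tendsto_pi_nhds.2; intro j; exact hdecay i j

private lemma exp_smul_tendsto_zero
    (hdecay : ∀ i j, Tendsto (fun t : ℝ => (exp (t • B)) i j) atTop (nhds 0)) :
    Tendsto (fun T : ℝ => T • exp (T • B)) atTop (nhds 0) := by
  obtain ⟨c, C, hc, hC, hbound⟩ := exp_decay_bound B hdecay
  apply squeeze_zero_norm' (a := fun T => C * (T * Real.exp (-c * T)))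
  · filter_upwards [eventually_ge_atTop (0:ℝ)] with T hT
    rw [norm_smul, Real.norm_eq_abs, abs_of_nonneg hT]
    calc T * ‖exp (T • B)‖ ≤ T * (C * Real.exp (-c * T)) :=
          mul_le_mul_of_nonneg_left (hbound T hT) hT
      _ = C * (T * Real.exp (-c * T)) := by ring
  · have h := (Real.tendsto_pow_mul_exp_neg_atTop_nhds_zero 1).comp
      (tendsto_id.const_mul_atTop hc)
    have h2 : Tendsto (fun T : ℝ => T * Real.exp (-c * T)) atTop (nhds 0) := by
      have := h.const_mul (1/c)
      simp only [mul_zero] at this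
      apply this.congr'
      filter_upwards [eventually_gt_atTop (0:ℝ)] with T hT
      simp only [Function.comp_apply, pow_one, id_eq]
      field_simp
    simpa using h2.const_mul C

private noncomputable def entryCLM (i j : Fin N) : Matrix (Fin N) (Fin N) ℝ →L[ℝ] ℝ :=
  LinearMap.toContinuousLinearMap
    { toFun := fun M => M i j, map_add' := fun _ _ => rfl, map_smul' := fun _ _ => rfl }

private lemma entryCLM_apply (i j : Fin N) (M : Matrix (Fin N) (Fin N) ℝ) :
    entryCLM i j M = M i j := rfl

private lemma exp_integral_Ioi
    (hdet : IsUnit B.det)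
    (hdecay : ∀ i j, Tendsto (fun t : ℝ => (exp (t • B)) i j) atTop (nhds 0))
    (e : ℕ) (he : e ≤ 1) :
    ∫ t in Ioi (0:ℝ), t ^ e • exp (t • B) = (-(B⁻¹)) ^ (e + 1) := by
  have hInt := exp_integrableOn B hdecay e he
  have hlim := intervalIntegral_tendsto_integral_Ioi 0 hInt tendsto_id
  rcases Nat.le_one_iff_eq_zero_or_eq_one.mp he with rfl | rfl
  · have heq : ∀ T : ℝ, (∫ t in (0:ℝ)..T, t ^ 0 • exp (t • B))
        = exp (T • B) * B⁻¹ - B⁻¹ := by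
      intro T; simpa using exp_ftc0 B hdet T
    simp only [heq] at hlim
    have hlim2 : Tendsto (fun T : ℝ => exp (T • B) * B⁻¹ - B⁻¹) atTop
        (nhds ((0 : Matrix (Fin N) (Fin N) ℝ) * B⁻¹ - B⁻¹)) := by
      exact (((exp_tendsto_zero B hdecay).mul_const B⁻¹).sub tendsto_const_nhds)
    have := tendsto_nhds_unique hlim hlim2
    rw [this]
    simp [pow_one]
  · have heq : ∀ T : ℝ, (∫ t in (0:ℝ)..T, t ^ 1 • exp (t • B))
        = T • (exp (T • B) * B⁻¹) - exp (T • B) * (B⁻¹ * B⁻¹) + B⁻¹ * B⁻¹ := by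
      intro T; simpa using exp_ftc1 B hdet T
    simp only [heq] at hlim
    have hsm : Tendsto (fun T : ℝ => T • (exp (T • B) * B⁻¹)) atTop
        (nhds ((0 : Matrix (Fin N) (Fin N) ℝ) * B⁻¹)) := by
      have h := (exp_smul_tendsto_zero B hdecay).mul_const B⁻¹
      simpa [smul_mul_assoc] using h
    have hlim2 : Tendsto
        (fun T : ℝ => T • (exp (T • B) * B⁻¹) - exp (T • B) * (B⁻¹ * B⁻¹) + B⁻¹ * B⁻¹)
        atTop (nhds ((0 : Matrix (Fin N) (Fin N) ℝ) * B⁻¹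
          - (0 : Matrix (Fin N) (Fin N) ℝ) * (B⁻¹ * B⁻¹) + B⁻¹ * B⁻¹)) :=
      ((hsm.sub ((exp_tendsto_zero B hdecay).mul_const (B⁻¹ * B⁻¹))).add tendsto_const_nhds)
    have := tendsto_nhds_unique hlim hlim2
    rw [this]
    have : (-(B⁻¹)) ^ (1 + 1) = B⁻¹ * B⁻¹ := by
      rw [pow_two, neg_mul_neg]
    rw [this]
    simp

lemma exp_entry_integrableOn
    (hdecay : ∀ i j, Tendsto (fun t : ℝ => (exp (t • B)) i j) atTop (nhds 0))
    (e : ℕ) (he : e ≤ 1) (i j : Fin N) :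
    IntegrableOn (fun t : ℝ => t ^ e * (exp (t • B)) i j) (Ioi (0:ℝ)) := by
  have h := (entryCLM i j).integrable_comp (exp_integrableOn B hdecay e he)
  simpa [entryCLM_apply, Function.comp, IntegrableOn] using h

lemma exp_entry_integral
    (hdet : IsUnit B.det)
    (hdecay : ∀ i j, Tendsto (fun t : ℝ => (exp (t • B)) i j) atTop (nhds 0))
    (e : ℕ) (he : e ≤ 1) (i j : Fin N) :
    ∫ t in Ioi (0:ℝ), t ^ e * (exp (t • B)) i j = (((-B)⁻¹) ^ (e + 1)) i j := by
  have h := (entryCLM i j).integral_comp_comm (exp_integrableOn B hdecay e he)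
  have hentry : (fun t : ℝ => entryCLM i j (t ^ e • exp (t • B)))
      = fun t : ℝ => t ^ e * (exp (t • B)) i j := rfl
  rw [hentry] at h
  rw [h, exp_integral_Ioi B hdet hdecay e he, entryCLM_apply]
  have hneg : (-B)⁻¹ = -(B⁻¹) := by
    apply Matrix.inv_eq_right_inv
    rw [neg_mul_neg]
    exact Matrix.mul_nonsing_inv B hdet
  rw [hneg]

end Auxiliary


lemma chainRow_zero {n : ℕ} (d : Fin (n + 1) → ℕ)
    (M : (k : Fin n) → Matrix (Fin (d k.castSucc)) (Fin (d k.succ)) ℝ)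
    (v0 : Fin (d 0) → ℝ) : chainRow d M v0 0 = v0 := rfl

lemma chainRow_succ {n : ℕ} (d : Fin (n + 1) → ℕ)
    (M : (k : Fin n) → Matrix (Fin (d k.castSucc)) (Fin (d k.succ)) ℝ)
    (v0 : Fin (d 0) → ℝ) (p : Fin n) :
    chainRow d M v0 p.succ = chainRow d M v0 p.castSucc ᵥ* M p := by
  simp [chainRow]

lemma chainRow_succ_comp {n : ℕ} (d : Fin (n + 2) → ℕ)
    (M : (k : Fin (n+1)) → Matrix (Fin (d k.castSucc)) (Fin (d k.succ)) ℝ)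
    (v0 : Fin (d 0) → ℝ) (p : Fin (n+1)) :
    chainRow d M v0 p.succ
      = chainRow (fun m : Fin (n+1) => d m.succ) (fun m : Fin n => M m.succ)
          (v0 ᵥ* M 0) p := by
  induction p using Fin.induction with
  | zero => rw [chainRow_succ]; rfl
  | succ p ih =>
      rw [chainRow_succ]
      show chainRow d M v0 p.castSucc.succ ᵥ* M p.succ = _
      rw [ih]
      exact (chainRow_succ _ _ _ p).symm

lemma chain_dot_eq_sum {n : ℕ} (d : Fin (n + 2) → ℕ)
    (M : (k : Fin (n+1)) → Matrix (Fin (d k.castSucc)) (Fin (d k.succ)) ℝ)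
    (v0 : Fin (d 0) → ℝ) (w : Fin (d (Fin.last (n+1))) → ℝ) :
    (chainRow d M v0 (Fin.last (n+1))) ⬝ᵥ w
      = ∑ i : (∀ m : Fin (n+2), Fin (d m)),
          v0 (i 0) * (∏ m : Fin (n+1), M m (i m.castSucc) (i m.succ)) * w (i (Fin.last (n+1))) := by
  induction n with
  | zero =>
      have hc : chainRow d M v0 (Fin.last (0+1)) = v0 ᵥ* M 0 := chainRow_succ d M v0 0
      rw [hc]
      rw [← (Fin.consEquiv (fun m : Fin 2 => Fin (d m))).sum_comp]
      rw [Fintype.sum_prod_type]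
      simp only [Fin.consEquiv_apply]
      have hlast : ∀ (j : Fin (d 0)) (g : ∀ m : Fin 1, Fin (d m.succ)),
          (Fin.cons j g : ∀ m : Fin 2, Fin (d m)) (Fin.last 1) = g 0 := fun j g => rfl
      have hone : ∀ (j : Fin (d 0)) (g : ∀ m : Fin 1, Fin (d m.succ)),
          (Fin.cons j g : ∀ m : Fin 2, Fin (d m)) ((0 : Fin 1).succ) = g 0 := fun j g => rfl
      have hprod : ∀ (j : Fin (d 0)) (g : ∀ m : Fin 1, Fin (d m.succ)),
          (∏ m : Fin (0+1), M m ((Fin.cons j g : ∀ m : Fin 2, Fin (d m)) m.castSucc)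
            ((Fin.cons j g : ∀ m : Fin 2, Fin (d m)) m.succ)) = M 0 j (g 0) := by
        intro j g
        rw [Fin.prod_univ_one]
        rfl
      simp only [hlast, hprod, Fin.cons_zero]
      -- now inner sums over g : ∀ m : Fin 1, Fin (d m.succ)
      have hpi : ∀ (j : Fin (d 0)),
          (∑ g : ∀ m : Fin 1, Fin (d (Fin.succ m)), v0 j * M 0 j (g 0) * w (g 0))
            = ∑ b : Fin (d 1), v0 j * M 0 j b * w b := by
        intro j
        rw [← (Equiv.piUnique (fun m : Fin 1 => Fin (d (Fin.succ m)))).symm.sum_comp]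
        apply Finset.sum_congr rfl
        intro b _
        rfl
      rw [Finset.sum_congr rfl (fun j _ => hpi j), Finset.sum_comm]
      simp only [dotProduct, Matrix.vecMul, Finset.sum_mul]
      apply Finset.sum_congr rfl
      intro b _
      apply Finset.sum_congr rfl
      intro j _
      ring
  | succ n ih =>
      have hstep : chainRow d M v0 (Fin.last (n+2))
          = chainRow (fun m : Fin (n+2) => d m.succ) (fun m : Fin (n+1) => M m.succ)
              (v0 ᵥ* M 0) (Fin.last (n+1)) :=
        chainRow_succ_comp d M v0 (Fin.last (n+1))
      rw [hstep, ih]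
      rw [← (Fin.consEquiv (fun m : Fin (n+3) => Fin (d m))).sum_comp, Fintype.sum_prod_type]
      simp only [Fin.consEquiv_apply]
      have hterm : ∀ (j : Fin (d 0)) (i' : ∀ m : Fin (n+2), Fin (d m.succ)),
          (v0 ((Fin.cons j i' : ∀ m : Fin (n+3), Fin (d m)) 0)
            * (∏ m : Fin (n+2), M m ((Fin.cons j i' : ∀ m : Fin (n+3), Fin (d m)) m.castSucc)
                ((Fin.cons j i' : ∀ m : Fin (n+3), Fin (d m)) m.succ)))
            * w ((Fin.cons j i' : ∀ m : Fin (n+3), Fin (d m)) (Fin.last (n+2)))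
          = v0 j * (M 0 j (i' 0)
              * ∏ m : Fin (n+1), M m.succ (i' m.castSucc) (i' m.succ)) * w (i' (Fin.last (n+1))) := by
        intro j i'
        have hsplit : (∏ m : Fin (n+2), M m ((Fin.cons j i' : ∀ m : Fin (n+3), Fin (d m)) m.castSucc)
                ((Fin.cons j i' : ∀ m : Fin (n+3), Fin (d m)) m.succ))
            = M 0 j (i' 0) * ∏ m : Fin (n+1), M m.succ (i' m.castSucc) (i' m.succ) := by
          rw [Fin.prod_univ_succ]
          rfl
        rw [hsplit]
        rfl
      simp only [hterm]
      rw [Finset.sum_comm]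
      apply Finset.sum_congr rfl
      intro i' _
      have hvm : (v0 ᵥ* M 0) (i' 0) = ∑ j : Fin (d 0), v0 j * M 0 j (i' 0) := rfl
      rw [hvm, Finset.sum_mul, Finset.sum_mul]
      apply Finset.sum_congr rfl
      intro j _
      ring

lemma chainRow_congr {n : ℕ} (d : Fin (n + 1) → ℕ)
    (M M' : (k : Fin n) → Matrix (Fin (d k.castSucc)) (Fin (d k.succ)) ℝ)
    (v0 : Fin (d 0) → ℝ) (p : Fin (n+1))
    (h : ∀ m : Fin n, m.castSucc < p → M m = M' m) :
    chainRow d M v0 p = chainRow d M' v0 p := by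
  induction p using Fin.induction with
  | zero => rfl
  | succ p ih =>
      rw [chainRow_succ, chainRow_succ,
        ih (fun m hm => h m (hm.trans (Fin.castSucc_lt_succ : p.castSucc < p.succ))),
        h p (Fin.castSucc_lt_succ : p.castSucc < p.succ)]

lemma chain_dot_collapse {n : ℕ} (d : Fin (n + 1) → ℕ)
    (M : (k : Fin n) → Matrix (Fin (d k.castSucc)) (Fin (d k.succ)) ℝ)
    (v0 : Fin (d 0) → ℝ) (p : Fin (n+1))
    (h : ∀ m : Fin n, p ≤ m.castSucc → M m *ᵥ (fun _ => (1:ℝ)) = fun _ => 1) :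
    chainRow d M v0 (Fin.last n) ⬝ᵥ (fun _ => (1:ℝ))
      = chainRow d M v0 p ⬝ᵥ (fun _ => (1:ℝ)) := by
  induction p using Fin.reverseInduction with
  | last => rfl
  | cast j ih =>
      rw [ih (fun m hm => h m ((Fin.castSucc_lt_succ : j.castSucc < j.succ).le.trans hm))]
      rw [chainRow_succ, ← Matrix.dotProduct_mulVec, h j (le_refl _)]

section MainInt

open NormedSpace Set

lemma dims_pos {n : ℕ} (d : Fin (n + 2) → ℕ)
    (A : (k : Fin (n + 1)) → Matrix (Fin (d k.castSucc)) (Fin (d k.castSucc)) ℝ)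
    (D : (k : Fin (n + 1)) → Matrix (Fin (d k.castSucc)) (Fin (d k.succ)) ℝ)
    (α : Fin (d 0) → ℝ) (hα1 : α ⬝ᵥ (fun _ => (1 : ℝ)) = 1)
    (hAinv : ∀ k, IsUnit (A k).det)
    (hD : ∀ k, D k *ᵥ (fun _ => (1 : ℝ)) = -(A k *ᵥ (fun _ => (1 : ℝ)))) :
    ∀ m, 0 < d m := by
  intro m
  induction m using Fin.induction with
  | zero =>
      by_contra h0
      have h0' : d 0 = 0 := Nat.eq_zero_of_not_pos h0
      haveI : IsEmpty (Fin (d 0)) := h0' ▸ inferInstanceAs (IsEmpty (Fin 0))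
      rw [dotProduct, Finset.univ_eq_empty, Finset.sum_empty] at hα1
      exact zero_ne_one hα1
  | succ m ihm =>
      by_contra h0
      have h0' : d m.succ = 0 := Nat.eq_zero_of_not_pos h0
      haveI : IsEmpty (Fin (d m.succ)) := h0' ▸ inferInstanceAs (IsEmpty (Fin 0))
      have hDz : D m *ᵥ (fun _ => (1 : ℝ)) = 0 := by
        funext i
        simp [Matrix.mulVec, dotProduct]
      have hAz : A m *ᵥ (fun _ => (1 : ℝ)) = 0 := by
        have := (hD m).symm.trans hDz
        simpa [neg_eq_zero] using this
      haveI : Nonempty (Fin (d m.castSucc)) :=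
        ⟨⟨0, ihm⟩⟩
      have h1 : (A m)⁻¹ *ᵥ (A m *ᵥ (fun _ => (1 : ℝ))) = fun _ => (1 : ℝ) := by
        rw [Matrix.mulVec_mulVec, Matrix.nonsing_inv_mul _ (hAinv m), Matrix.one_mulVec]
      rw [hAz, Matrix.mulVec_zero] at h1
      have := congrFun h1 (Classical.arbitrary _)
      simp at this

lemma integral_chain_eq {n : ℕ} (d : Fin (n + 2) → ℕ)
    (A : (k : Fin (n + 1)) → Matrix (Fin (d k.castSucc)) (Fin (d k.castSucc)) ℝ)
    (D : (k : Fin (n + 1)) → Matrix (Fin (d k.castSucc)) (Fin (d k.succ)) ℝ)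
    (α : Fin (d 0) → ℝ)
    (hAinv : ∀ k, IsUnit (A k).det)
    (hAdecay : ∀ k, ∀ i j, Tendsto (fun t : ℝ => (exp (t • A k)) i j) atTop (nhds 0))
    (w : Fin (n + 1) → ℕ) (hw : ∀ m, w m ≤ 1)
    (W : (Fin (n + 1) → ℝ) → ℝ) (hW : ∀ y, W y = ∏ m, (y m) ^ (w m)) :
    ∫ y in Set.univ.pi (fun _ : Fin (n + 1) => Set.Ioi (0 : ℝ)),
        W y * ((chainRow d (fun m => exp (y m • A m) * D m) α (Fin.last (n + 1))) ⬝ᵥ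
          (fun _ => (1 : ℝ)))
      = (chainRow d (fun m => ((-(A m))⁻¹) ^ (w m + 1) * D m) α (Fin.last (n + 1))) ⬝ᵥ
          (fun _ => (1 : ℝ)) := by
  classical
  set S : Set (Fin (n+1) → ℝ) := Set.univ.pi (fun _ : Fin (n + 1) => Set.Ioi (0 : ℝ)) with hS
  have hSmeas : MeasurableSet S := MeasurableSet.univ_pi (fun _ => measurableSet_Ioi)
  -- the single-coordinate functions
  set g : (∀ m : Fin (n+2), Fin (d m)) → (m : Fin (n+1)) → ℝ → ℝ :=
    fun i m => (Ioi (0:ℝ)).indicator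
      (fun t => t ^ (w m) * ((exp (t • A m) * D m) (i m.castSucc) (i m.succ))) with hg
  -- integrability of each coordinate function
  have hgint : ∀ i m, Integrable (g i m) := by
    intro i m
    rw [hg]
    rw [integrable_indicator_iff measurableSet_Ioi]
    have : ∀ t : ℝ, t ^ (w m) * ((exp (t • A m) * D m) (i m.castSucc) (i m.succ))
        = ∑ k₂ : Fin (d m.castSucc),
            (t ^ (w m) * (exp (t • A m)) (i m.castSucc) k₂) * D m k₂ (i m.succ) := by
      intro t
      simp only [Matrix.mul_apply, Finset.mul_sum, mul_assoc]
    simp only [this]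
    apply integrable_finset_sum
    intro k₂ _
    exact (exp_entry_integrableOn (A m) (hAdecay m) (w m) (hw m) _ _).mul_const _
  -- value of each coordinate integral
  have hgval : ∀ i m, ∫ t, g i m t
      = (((-(A m))⁻¹) ^ (w m + 1) * D m) (i m.castSucc) (i m.succ) := by
    intro i m
    rw [hg]
    simp only
    rw [MeasureTheory.integral_indicator measurableSet_Ioi]
    have : ∀ t : ℝ, t ^ (w m) * ((exp (t • A m) * D m) (i m.castSucc) (i m.succ))
        = ∑ k₂ : Fin (d m.castSucc),
            (t ^ (w m) * (exp (t • A m)) (i m.castSucc) k₂) * D m k₂ (i m.succ) := by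
      intro t
      simp only [Matrix.mul_apply, Finset.mul_sum, mul_assoc]
    rw [setIntegral_congr_fun measurableSet_Ioi (fun t _ => this t)]
    rw [integral_finset_sum _ (fun k₂ _ =>
      ((exp_entry_integrableOn (A m) (hAdecay m) (w m) (hw m) _ _).mul_const _))]
    rw [Matrix.mul_apply]
    apply Finset.sum_congr rfl
    intro k₂ _
    rw [MeasureTheory.integral_mul_const, exp_entry_integral (A m) (hAinv m) (hAdecay m) (w m) (hw m)]
  -- pointwise identity for the indicator integrand
  have hpt : ∀ y : Fin (n+1) → ℝ,
      S.indicator (fun y => W y *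
          ((chainRow d (fun m => exp (y m • A m) * D m) α (Fin.last (n + 1))) ⬝ᵥ
            (fun _ => (1 : ℝ)))) y
        = ∑ i : (∀ m : Fin (n+2), Fin (d m)), α (i 0) * ∏ m : Fin (n+1), g i m (y m) := by
    intro y
    by_cases hy : y ∈ S
    · rw [Set.indicator_of_mem hy]
      rw [chain_dot_eq_sum, Finset.mul_sum]
      apply Finset.sum_congr rfl
      intro i _
      have hmem : ∀ m : Fin (n+1), y m ∈ Ioi (0:ℝ) := by
        intro m
        exact hy m (Set.mem_univ m)
      have : ∀ m : Fin (n+1), g i m (y m)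
          = (y m) ^ (w m) * ((exp (y m • A m) * D m) (i m.castSucc) (i m.succ)) := by
        intro m
        rw [hg]
        exact Set.indicator_of_mem (hmem m) _
      rw [Finset.prod_congr rfl (fun m _ => this m), hW y, Finset.prod_mul_distrib]
      ring
    · rw [Set.indicator_of_notMem hy]
      symm
      apply Finset.sum_eq_zero
      intro i _
      obtain ⟨m₀, _, hm₀⟩ : ∃ m₀ ∈ Finset.univ, y m₀ ∉ Ioi (0:ℝ) := by
        by_contra hcon
        push_neg at hcon
        exact hy (fun m _ => hcon m (Finset.mem_univ m))
      rw [Finset.prod_eq_zero (Finset.mem_univ m₀) (Set.indicator_of_notMem hm₀ _), mul_zero]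
  -- now compute
  rw [← integral_indicator hSmeas]
  rw [integral_congr_ae (Filter.Eventually.of_forall hpt)]
  rw [integral_finset_sum _ (fun i _ =>
    ((Integrable.fintype_prod (f := fun m => g i m) (fun m => hgint i m)).const_mul _ :
      Integrable (fun y : Fin (n+1) → ℝ => α (i 0) * ∏ m : Fin (n+1), g i m (y m))))]
  have : ∀ i : (∀ m : Fin (n+2), Fin (d m)),
      ∫ y : Fin (n+1) → ℝ, α (i 0) * ∏ m : Fin (n+1), g i m (y m)
        = α (i 0) * ∏ m : Fin (n+1),
            (((-(A m))⁻¹) ^ (w m + 1) * D m) (i m.castSucc) (i m.succ) := by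
    intro i
    rw [MeasureTheory.integral_const_mul]
    rw [MeasureTheory.integral_fintype_prod_volume_eq_prod (f := fun m => g i m)]
    rw [Finset.prod_congr rfl (fun m _ => hgval i m)]
  rw [Finset.sum_congr rfl (fun i _ => this i)]
  rw [chain_dot_eq_sum]
  apply Finset.sum_congr rfl
  intro i _
  ring

end MainInt

/-- Covariance formula for a sequential multivariate phase-type vector: for `k < ℓ`,
`Cov(Y_k,Y_ℓ) = γ_k (−A_k)^{−2} D_k (−A_{k+1})^{−1} D_{k+1} ⋯ (−A_{ℓ−1})^{−1} D_{ℓ−1}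
(−A_ℓ)^{−1} 𝟏 − (γ_k (−A_k)^{−1} 𝟏)(γ_ℓ (−A_ℓ)^{−1} 𝟏)`.  Here `Cov(Y_k,Y_ℓ)` is
`E[Y_k Y_ℓ] − E[Y_k] E[Y_ℓ]` expressed via integrals of the joint density, and
`γ_j = α (−A₁)^{−1} D₁ ⋯ (−A_{j−1})^{−1} D_{j−1}`. -/
theorem stmt_6 (n : ℕ) (d : Fin (n + 2) → ℕ)
    (A : (k : Fin (n + 1)) → Matrix (Fin (d k.castSucc)) (Fin (d k.castSucc)) ℝ)
    (D : (k : Fin (n + 1)) → Matrix (Fin (d k.castSucc)) (Fin (d k.succ)) ℝ)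
    (α : Fin (d 0) → ℝ)
    (hα : ∀ i, 0 ≤ α i) (hα1 : α ⬝ᵥ (fun _ => (1 : ℝ)) = 1)
    (hAinv : ∀ k, IsUnit (A k).det)
    (hAdecay : ∀ k, ∀ i j, Tendsto (fun t : ℝ => (NormedSpace.exp (t • A k)) i j) atTop (nhds 0))
    (hAnn : ∀ k, ∀ t : ℝ, 0 ≤ t → ∀ i j, 0 ≤ (NormedSpace.exp (t • A k)) i j)
    (hDnn : ∀ k, ∀ i j, 0 ≤ D k i j)
    (hD : ∀ k, D k *ᵥ (fun _ => (1 : ℝ)) = -(A k *ᵥ (fun _ => (1 : ℝ))))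
    (k ℓ : Fin (n + 1)) (hkl : k < ℓ) :
    (∫ y in Set.univ.pi (fun _ : Fin (n + 1) => Set.Ioi (0 : ℝ)),
        y k * y ℓ *
          ((chainRow d (fun m => NormedSpace.exp (y m • A m) * D m) α (Fin.last (n + 1))) ⬝ᵥ
            (fun _ => (1 : ℝ))))
      - (∫ y in Set.univ.pi (fun _ : Fin (n + 1) => Set.Ioi (0 : ℝ)),
          y k *
            ((chainRow d (fun m => NormedSpace.exp (y m • A m) * D m) α (Fin.last (n + 1))) ⬝ᵥ
              (fun _ => (1 : ℝ)))) *
        (∫ y in Set.univ.pi (fun _ : Fin (n + 1) => Set.Ioi (0 : ℝ)),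
          y ℓ *
            ((chainRow d (fun m => NormedSpace.exp (y m • A m) * D m) α (Fin.last (n + 1))) ⬝ᵥ
              (fun _ => (1 : ℝ))))
      = (chainRow d (fun m => ((-(A m))⁻¹) ^ (if m = k then 2 else 1) * D m) α ℓ.castSucc) ⬝ᵥ
          ((-(A ℓ))⁻¹ *ᵥ (fun _ => (1 : ℝ)))
        - ((chainRow d (fun m => (-(A m))⁻¹ * D m) α k.castSucc) ⬝ᵥ
            ((-(A k))⁻¹ *ᵥ (fun _ => (1 : ℝ)))) *
          ((chainRow d (fun m => (-(A m))⁻¹ * D m) α ℓ.castSucc) ⬝ᵥ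
            ((-(A ℓ))⁻¹ *ᵥ (fun _ => (1 : ℝ)))) := by
  classical
  have hkl' : k ≠ ℓ := Fin.ne_of_lt hkl
  have hnegdet : ∀ m, IsUnit (-(A m)).det := by
    intro m
    rw [Matrix.det_neg]
    exact (isUnit_one.neg.pow _).mul (hAinv m)
  have hDone : ∀ m, D m *ᵥ (fun _ => (1:ℝ)) = (-(A m)) *ᵥ (fun _ => (1:ℝ)) := by
    intro m
    rw [hD m, Matrix.neg_mulVec]
  have hmul : ∀ (m : Fin (n+1)) (s : ℕ),
      ((-(A m))⁻¹ ^ (s+1) * D m) *ᵥ (fun _ => (1:ℝ)) = (-(A m))⁻¹ ^ s *ᵥ (fun _ => (1:ℝ)) := by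
    intro m s
    rw [← Matrix.mulVec_mulVec, hDone m, Matrix.mulVec_mulVec, pow_succ, Matrix.mul_assoc,
      Matrix.nonsing_inv_mul _ (hnegdet m), Matrix.mul_one]
  have peel : ∀ (e : Fin (n+1) → ℕ) (p : Fin (n+1)), e p = 1 → (∀ m, p < m → e m = 0) →
      chainRow d (fun m => (-(A m))⁻¹ ^ (e m + 1) * D m) α (Fin.last (n+1)) ⬝ᵥ (fun _ => (1:ℝ))
        = chainRow d (fun m => (-(A m))⁻¹ ^ (e m + 1) * D m) α p.castSucc ⬝ᵥ
            ((-(A p))⁻¹ *ᵥ (fun _ => (1:ℝ))) := by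
    intro e p hep htail
    rw [chain_dot_collapse d _ α p.succ ?_]
    · rw [chainRow_succ, ← Matrix.dotProduct_mulVec]
      congr 1
      have h2 : (-(A p))⁻¹ ^ (e p + 1) * D p = (-(A p))⁻¹ ^ 2 * D p := by rw [hep]
      rw [h2, hmul p 1, pow_one]
    · intro m hm
      have hlt : p < m := Fin.succ_le_castSucc_iff.mp hm
      have h0 : (-(A m))⁻¹ ^ (e m + 1) * D m = (-(A m))⁻¹ ^ (0 + 1) * D m := by
        rw [htail m hlt]
      rw [h0, hmul m 0, pow_zero, Matrix.one_mulVec]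
  have hprod_single : ∀ (p : Fin (n+1)) (y : Fin (n+1) → ℝ),
      (∏ m, (y m) ^ (if m = p then 1 else 0)) = y p := by
    intro p y
    have h : ∀ m : Fin (n+1), (y m) ^ (if m = p then 1 else 0) = if m = p then y m else 1 := by
      intro m; split_ifs <;> simp
    rw [Finset.prod_congr rfl (fun m _ => h m), Finset.prod_ite_eq' Finset.univ p y]
    simp
  have e2 : (∫ y in Set.univ.pi (fun _ : Fin (n + 1) => Set.Ioi (0 : ℝ)),
        y k * y ℓ *
          ((chainRow d (fun m => NormedSpace.exp (y m • A m) * D m) α (Fin.last (n + 1))) ⬝ᵥ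
            (fun _ => (1 : ℝ))))
      = (chainRow d (fun m => ((-(A m))⁻¹) ^ ((fun m : Fin (n+1) => (if m = k then 1 else 0) + (if m = ℓ then 1 else 0) : Fin (n+1) → ℕ) m + 1) * D m) α (Fin.last (n + 1))) ⬝ᵥ
          (fun _ => (1 : ℝ)) :=
    integral_chain_eq d A D α hAinv hAdecay (fun m : Fin (n+1) => (if m = k then 1 else 0) + (if m = ℓ then 1 else 0) : Fin (n+1) → ℕ)
      (fun m => by
        show ((if m = k then 1 else 0) + (if m = ℓ then 1 else 0) : ℕ) ≤ 1
        by_cases h1 : m = k <;> by_cases h2 : m = ℓ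
        · exact absurd (h1.symm.trans h2) hkl'
        all_goals simp [h1, h2, hkl', Ne.symm hkl'])
      (fun y => y k * y ℓ)
      (fun y => by
        simp only [pow_add]
        rw [Finset.prod_mul_distrib, hprod_single k y, hprod_single ℓ y])
  have ek : (∫ y in Set.univ.pi (fun _ : Fin (n + 1) => Set.Ioi (0 : ℝ)),
        y k *
          ((chainRow d (fun m => NormedSpace.exp (y m • A m) * D m) α (Fin.last (n + 1))) ⬝ᵥ
            (fun _ => (1 : ℝ))))
      = (chainRow d (fun m => ((-(A m))⁻¹) ^ ((fun m : Fin (n+1) => if m = k then 1 else 0 : Fin (n+1) → ℕ) m + 1) * D m) α (Fin.last (n + 1))) ⬝ᵥ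
          (fun _ => (1 : ℝ)) :=
    integral_chain_eq d A D α hAinv hAdecay (fun m : Fin (n+1) => if m = k then 1 else 0 : Fin (n+1) → ℕ)
      (fun m => by
        show (if m = k then 1 else 0 : ℕ) ≤ 1
        split_ifs <;> norm_num)
      (fun y => y k) (fun y => (hprod_single k y).symm)
  have el : (∫ y in Set.univ.pi (fun _ : Fin (n + 1) => Set.Ioi (0 : ℝ)),
        y ℓ *
          ((chainRow d (fun m => NormedSpace.exp (y m • A m) * D m) α (Fin.last (n + 1))) ⬝ᵥ
            (fun _ => (1 : ℝ))))
      = (chainRow d (fun m => ((-(A m))⁻¹) ^ ((fun m : Fin (n+1) => if m = ℓ then 1 else 0 : Fin (n+1) → ℕ) m + 1) * D m) α (Fin.last (n + 1))) ⬝ᵥ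
          (fun _ => (1 : ℝ)) :=
    integral_chain_eq d A D α hAinv hAdecay (fun m : Fin (n+1) => if m = ℓ then 1 else 0 : Fin (n+1) → ℕ)
      (fun m => by
        show (if m = ℓ then 1 else 0 : ℕ) ≤ 1
        split_ifs <;> norm_num)
      (fun y => y ℓ) (fun y => (hprod_single ℓ y).symm)
  rw [e2, ek, el]
  rw [peel (fun m : Fin (n+1) => (if m = k then 1 else 0) + (if m = ℓ then 1 else 0) : Fin (n+1) → ℕ) ℓ (by simp [hkl'.symm, hkl'])
    (fun m hm => by
      have h1 : m ≠ k := Fin.ne_of_gt (hkl.trans hm)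
      have h2 : m ≠ ℓ := Fin.ne_of_gt hm
      simp [h1, h2])]
  rw [peel (fun m : Fin (n+1) => if m = k then 1 else 0 : Fin (n+1) → ℕ) k (by simp)
    (fun m hm => by
      have h1 : m ≠ k := Fin.ne_of_gt hm
      simp [h1])]
  rw [peel (fun m : Fin (n+1) => if m = ℓ then 1 else 0 : Fin (n+1) → ℕ) ℓ (by simp)
    (fun m hm => by
      have h2 : m ≠ ℓ := Fin.ne_of_gt hm
      simp [h2])]
  have c2 : chainRow d (fun m => (-(A m))⁻¹ ^ ((fun m : Fin (n+1) => (if m = k then 1 else 0) + (if m = ℓ then 1 else 0) : Fin (n+1) → ℕ) m + 1) * D m) α ℓ.castSucc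
      = chainRow d (fun m => ((-(A m))⁻¹) ^ (if m = k then 2 else 1) * D m) α ℓ.castSucc := by
    apply chainRow_congr
    intro m hm
    have h2 : m ≠ ℓ := Fin.ne_of_lt (Fin.castSucc_lt_castSucc_iff.mp hm)
    have he : (fun m : Fin (n+1) => (if m = k then 1 else 0) + (if m = ℓ then 1 else 0) : Fin (n+1) → ℕ) m + 1
        = (if m = k then 2 else 1) := by
      by_cases h1 : m = k <;> simp [h1, h2, hkl']
    rw [he]
  have ck : chainRow d (fun m => (-(A m))⁻¹ ^ ((fun m : Fin (n+1) => if m = k then 1 else 0 : Fin (n+1) → ℕ) m + 1) * D m) α k.castSucc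
      = chainRow d (fun m => (-(A m))⁻¹ * D m) α k.castSucc := by
    apply chainRow_congr
    intro m hm
    have h1 : m ≠ k := Fin.ne_of_lt (Fin.castSucc_lt_castSucc_iff.mp hm)
    have he : (fun m : Fin (n+1) => if m = k then 1 else 0 : Fin (n+1) → ℕ) m + 1 = 1 := by
      simp [h1]
    rw [he, pow_one]
  have cl : chainRow d (fun m => (-(A m))⁻¹ ^ ((fun m : Fin (n+1) => if m = ℓ then 1 else 0 : Fin (n+1) → ℕ) m + 1) * D m) α ℓ.castSucc
      = chainRow d (fun m => (-(A m))⁻¹ * D m) α ℓ.castSucc := by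
    apply chainRow_congr
    intro m hm
    have h2 : m ≠ ℓ := Fin.ne_of_lt (Fin.castSucc_lt_castSucc_iff.mp hm)
    have he : (fun m : Fin (n+1) => if m = ℓ then 1 else 0 : Fin (n+1) → ℕ) m + 1 = 1 := by
      simp [h2]
    rw [he, pow_one]
  rw [c2, ck, cl]
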